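/- Suppose ℓ satisfies the Metric Loss Assumption, is bounded above by L > 0, every f in the hypothesis class H is a measurable surjective function, and the label marginals coincide: p_y = q_y. If CC(κ) holds for H for some κ > 0, then LJE(2κ) holds for H. -/

import Mathlib

open MeasureTheory ProbabilityTheory

/-- A coupling of `μ` and `ν`: a joint measure on the product with the given marginals. -/
def IsCoupling {A B : Type*} [MeasurableSpace A] [MeasurableSpace B]
    (γ : Measure (A × B)) (μ : Measure A) (ν : Measure B) : Prop :=
  γ.map Prod.fst = μ ∧ γ.map Prod.snd = ν

/-- The `α`-Wasserstein distance between `μ` and `ν` with cost function `c`: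
`W_{α,c}(μ,ν) = (inf_{γ ∈ Γ(μ,ν)} ∫ c^α dγ)^{1/α}`. -/
noncomputable def Wass {A B : Type*} [MeasurableSpace A] [MeasurableSpace B]
    (α : ℝ) (c : A × B → ℝ) (μ : Measure A) (ν : Measure B) : ℝ :=
  sInf { r | ∃ γ : Measure (A × B), IsCoupling γ μ ν ∧ r = ∫ z, c z ^ α ∂γ } ^ (1 / α)

/-- The 1-Wasserstein distance between `μ` and `ν` with cost function `c`. -/
noncomputable def W1 {A B : Type*} [MeasurableSpace A] [MeasurableSpace B]
    (c : A × B → ℝ) (μ : Measure A) (ν : Measure B) : ℝ :=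
  sInf { r | ∃ γ : Measure (A × B), IsCoupling γ μ ν ∧ r = ∫ z, c z ∂γ }

/-- The risk of classifier `f` under joint distribution `p`, w.r.t. loss `ℓ`. -/
noncomputable def risk {X Y : Type*} [MeasurableSpace X] [MeasurableSpace Y]
    (ℓ : Y × Y → ℝ) (f : X → Y) (p : Measure (X × Y)) : ℝ :=
  ∫ z, ℓ (f z.1, z.2) ∂p

/-- `f#p` : pushforward of a joint measure `p` under `(x, y) ↦ (f x, y)`. -/
noncomputable def jmap {X Y : Type*} [MeasurableSpace X] [MeasurableSpace Y]
    (f : X → Y) (p : Measure (X × Y)) : Measure (Y × Y) :=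
  p.map (fun z => (f z.1, z.2))

instance jmap.instIsFiniteMeasure {X Y : Type*} [MeasurableSpace X] [MeasurableSpace Y]
    (f : X → Y) (p : Measure (X × Y)) [IsFiniteMeasure p] : IsFiniteMeasure (jmap f p) := by
  unfold jmap; infer_instance

lemma w1_lb {Y : Type*} [MeasurableSpace Y] [Fintype Y] [MeasurableSingletonClass Y]
    (ℓ : Y × Y → ℝ)
    (hsymm : ∀ y y' : Y, ℓ (y, y') = ℓ (y', y))
    (hnonneg : ∀ y y' : Y, 0 ≤ ℓ (y, y'))
    (htri : ∀ y₁ y₂ y₃ : Y, ℓ (y₁, y₃) ≤ ℓ (y₁, y₂) + ℓ (y₂, y₃))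
    (y : Y) (μ ν : Measure Y) [IsProbabilityMeasure μ] [IsProbabilityMeasure ν] :
    (∫ b, ℓ (b, y) ∂ν) - ∫ a, ℓ (a, y) ∂μ ≤ W1 ℓ μ ν := by
  apply le_csInf
  · exact ⟨∫ z, ℓ z ∂(μ.prod ν), μ.prod ν, ⟨by simp, by simp⟩, rfl⟩
  · rintro r ⟨γ, ⟨hγ1, hγ2⟩, rfl⟩
    haveI : IsProbabilityMeasure γ := by
      constructor
      have := congrArg (fun m : Measure Y => m Set.univ) hγ1
      simpa [Measure.map_apply measurable_fst MeasurableSet.univ] using this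
    have h1 : (∫ b, ℓ (b, y) ∂ν) = ∫ z, ℓ (z.2, y) ∂γ := by
      rw [← hγ2, integral_map measurable_snd.aemeasurable
        (measurable_of_countable _).aestronglyMeasurable]
    have h2 : (∫ a, ℓ (a, y) ∂μ) = ∫ z, ℓ (z.1, y) ∂γ := by
      rw [← hγ1, integral_map measurable_fst.aemeasurable
        (measurable_of_countable _).aestronglyMeasurable]
    rw [h1, h2, ← integral_sub .of_finite .of_finite]
    refine integral_mono .of_finite .of_finite fun z => ?_
    have t1 := htri z.2 z.1 y
    have t2 := hsymm z.2 z.1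
    have : (z.1, z.2) = z := rfl
    rw [this] at t2
    linarith

lemma risk_eq_iterated {X Y : Type*} [MeasurableSpace X] [StandardBorelSpace X] [Nonempty X]
    [MeasurableSpace Y] [Fintype Y] [MeasurableSingletonClass Y] [Nonempty Y]
    (ℓ : Y × Y → ℝ) (hℓmeas : Measurable ℓ)
    (hnonneg : ∀ y y' : Y, 0 ≤ ℓ (y, y'))
    (L : ℝ) (hbound : ∀ y y' : Y, ℓ (y, y') ≤ L)
    (f : X → Y) (hfm : Measurable f)
    (r : Measure (X × Y)) [IsProbabilityMeasure r] :
    risk ℓ f r = ∫ y, (∫ x, ℓ (f x, y) ∂((r.map Prod.swap).condKernel y))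
      ∂((r.map Prod.swap).fst) := by
  haveI : IsProbabilityMeasure (r.map Prod.swap) :=
    Measure.isProbabilityMeasure_map measurable_swap.aemeasurable
  have hg : Measurable (fun w : Y × X => ℓ (f w.2, w.1)) :=
    hℓmeas.comp ((hfm.comp measurable_snd).prodMk measurable_fst)
  have hint : Integrable (fun w : Y × X => ℓ (f w.2, w.1)) (r.map Prod.swap) := by
    refine Integrable.mono' (integrable_const L) hg.aestronglyMeasurable
      (Filter.Eventually.of_forall fun w => ?_)
    rw [Real.norm_eq_abs, abs_of_nonneg (hnonneg _ _)]
    exact hbound _ _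
  have h1 : risk ℓ f r = ∫ w, ℓ (f w.2, w.1) ∂(r.map Prod.swap) := by
    rw [risk, integral_map measurable_swap.aemeasurable hg.aestronglyMeasurable]
    rfl
  have h2 : (∫ w : Y × X, ℓ (f w.2, w.1)
        ∂((r.map Prod.swap).fst ⊗ₘ (r.map Prod.swap).condKernel)) =
      ∫ y, ∫ x, ℓ (f x, y) ∂((r.map Prod.swap).condKernel y) ∂((r.map Prod.swap).fst) :=
    Measure.integral_compProd (by rwa [Measure.disintegrate (r.map Prod.swap) ((r.map Prod.swap).condKernel)])
  rw [Measure.disintegrate (r.map Prod.swap) ((r.map Prod.swap).condKernel)] at h2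
  rw [h1, h2]

theorem statement12 {X Y : Type*} [MeasurableSpace X] [StandardBorelSpace X] [Nonempty X]
    [MeasurableSpace Y] [Fintype Y] [MeasurableSingletonClass Y] [Nonempty Y]
    (ℓ : Y × Y → ℝ) (hℓmeas : Measurable ℓ)
    (hsymm : ∀ y y' : Y, ℓ (y, y') = ℓ (y', y))
    (hnonneg : ∀ y y' : Y, 0 ≤ ℓ (y, y'))
    (htri : ∀ y₁ y₂ y₃ : Y, ℓ (y₁, y₃) ≤ ℓ (y₁, y₂) + ℓ (y₂, y₃))
    (hid : ∀ y y' : Y, ℓ (y, y') = 0 ↔ y = y')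
    (L : ℝ) (hL : 0 < L) (hbound : ∀ y y' : Y, ℓ (y, y') ≤ L)
    (p q : Measure (X × Y)) [IsProbabilityMeasure p] [IsProbabilityMeasure q]
    (H : Set (X → Y)) (hH : ∀ f ∈ H, Measurable f ∧ Function.Surjective f)
    (hmarg : p.map Prod.snd = q.map Prod.snd)
    (κ : ℝ) (hκ : 0 < κ)
    (hCC : ∃ f ∈ H, risk ℓ f p +
      (⨆ y : Y, W1 ℓ (((p.map Prod.swap).condKernel y).map f)
        (((q.map Prod.swap).condKernel y).map f)) < κ) :
    ∃ f ∈ H, risk ℓ f p + risk ℓ f q < 2 * κ := by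
  obtain ⟨f, hfH, hlt⟩ := hCC
  obtain ⟨hfm, -⟩ := hH f hfH
  refine ⟨f, hfH, ?_⟩
  haveI : IsProbabilityMeasure (p.map Prod.swap) :=
    Measure.isProbabilityMeasure_map measurable_swap.aemeasurable
  haveI : IsProbabilityMeasure (q.map Prod.swap) :=
    Measure.isProbabilityMeasure_map measurable_swap.aemeasurable
  set S := ⨆ y : Y, W1 ℓ (((p.map Prod.swap).condKernel y).map f)
        (((q.map Prod.swap).condKernel y).map f) with hSdef
  set ν := (p.map Prod.swap).fst with hν
  have hνq : (q.map Prod.swap).fst = ν := by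
    rw [hν, Measure.fst_map_swap, Measure.fst_map_swap]
    unfold Measure.snd
    rw [hmarg]
  haveI : ∀ y : Y, IsProbabilityMeasure (((p.map Prod.swap).condKernel y).map f) :=
    fun y => Measure.isProbabilityMeasure_map hfm.aemeasurable
  haveI : ∀ y : Y, IsProbabilityMeasure (((q.map Prod.swap).condKernel y).map f) :=
    fun y => Measure.isProbabilityMeasure_map hfm.aemeasurable
  have hW1nonneg : ∀ y : Y, 0 ≤ W1 ℓ (((p.map Prod.swap).condKernel y).map f)
      (((q.map Prod.swap).condKernel y).map f) := by
    intro y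
    refine Real.sInf_nonneg ?_
    rintro r ⟨γ, -, rfl⟩
    exact integral_nonneg fun z => hnonneg _ _
  have hWS : ∀ y : Y, W1 ℓ (((p.map Prod.swap).condKernel y).map f)
      (((q.map Prod.swap).condKernel y).map f) ≤ S := by
    intro y
    rw [hSdef]
    exact le_ciSup (Set.Finite.bddAbove (Set.finite_range (fun y : Y =>
      W1 ℓ (((p.map Prod.swap).condKernel y).map f)
        (((q.map Prod.swap).condKernel y).map f)))) y
  have hS0 : 0 ≤ S := le_trans (hW1nonneg (Classical.arbitrary Y)) (hWS _)
  have hrp := risk_eq_iterated ℓ hℓmeas hnonneg L hbound f hfm p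
  have hrq := risk_eq_iterated ℓ hℓmeas hnonneg L hbound f hfm q
  rw [hνq] at hrq
  have hpt : ∀ y : Y, (∫ x, ℓ (f x, y) ∂((q.map Prod.swap).condKernel y)) ≤
      (∫ x, ℓ (f x, y) ∂((p.map Prod.swap).condKernel y)) + S := by
    intro y
    have h1 : (∫ x, ℓ (f x, y) ∂((p.map Prod.swap).condKernel y)) =
        ∫ a, ℓ (a, y) ∂(((p.map Prod.swap).condKernel y).map f) := by
      rw [integral_map hfm.aemeasurable (measurable_of_countable _).aestronglyMeasurable]
    have h2 : (∫ x, ℓ (f x, y) ∂((q.map Prod.swap).condKernel y)) =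
        ∫ a, ℓ (a, y) ∂(((q.map Prod.swap).condKernel y).map f) := by
      rw [integral_map hfm.aemeasurable (measurable_of_countable _).aestronglyMeasurable]
    have hw := w1_lb ℓ hsymm hnonneg htri y (((p.map Prod.swap).condKernel y).map f)
      (((q.map Prod.swap).condKernel y).map f)
    have := hWS y
    rw [h1, h2]
    linarith
  have hqp : risk ℓ f q ≤ risk ℓ f p + S := by
    rw [hrp, hrq]
    calc (∫ y, (∫ x, ℓ (f x, y) ∂((q.map Prod.swap).condKernel y)) ∂ν)
        ≤ ∫ y, ((∫ x, ℓ (f x, y) ∂((p.map Prod.swap).condKernel y)) + S) ∂ν :=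
          integral_mono .of_finite .of_finite hpt
      _ = (∫ y, (∫ x, ℓ (f x, y) ∂((p.map Prod.swap).condKernel y)) ∂ν) + S := by
          rw [integral_add .of_finite (integrable_const S), integral_const]
          simp
  have hrp0 : 0 ≤ risk ℓ f p := integral_nonneg fun z => hnonneg _ _
  linarith
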